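/- Let F = (X_i, f_{i,j})_{i ∈ I} be a projective system of pre-spectral spaces and spectral bonding maps indexed by a nonempty directed poset I, and suppose {f_i : X → X_i} is its limit in the category of topological spaces, where each f_i is a spectral map. Then X is pre-spectral, the compact open sets of X are exactly the sets f_i^{-1}(V) for i ∈ I and V compact open in X_i, and X is the limit of F in the category of pre-spectral spaces with spectral maps. -/

import Mathlib

open Set TopologicalSpace

/-- A bounded sublattice of the powerset of `X`. -/
def IsBoundedSublattice {X : Type*} (L : Set (Set X)) : Prop :=
  ∅ ∈ L ∧ Set.univ ∈ L ∧ (∀ U ∈ L, ∀ V ∈ L, U ∪ V ∈ L) ∧ ∀ U ∈ L, ∀ V ∈ L, U ∩ V ∈ L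

/-- A topology is pre-spectral if its compact open sets form a bounded
sublattice of the powerset that generates the topology. -/
def IsPreSpectral {X : Type*} (t : TopologicalSpace X) : Prop :=
  IsBoundedSublattice {U : Set X | @IsCompact X t U ∧ t.IsOpen U} ∧
  TopologicalSpace.generateFrom {U : Set X | @IsCompact X t U ∧ t.IsOpen U} = t

/-- A spectral map w.r.t. explicit topologies: continuous, and preimages of
compact open sets are compact open. -/
def IsSpectralTo {A B : Type*} (tA : TopologicalSpace A) (tB : TopologicalSpace B)
    (f : A → B) : Prop :=
  @Continuous A B tA tB f ∧
    ∀ V : Set B, @IsCompact B tB V → tB.IsOpen V →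
      @IsCompact A tA (f ⁻¹' V) ∧ tA.IsOpen (f ⁻¹' V)

universe u

theorem projective_limit_transfer {ι : Type u} [Preorder ι] [Nonempty ι]
    (hdir : ∀ i j : ι, ∃ k, i ≤ k ∧ j ≤ k)
    (Xs : ι → Type u) (ts : ∀ i, TopologicalSpace (Xs i))
    (b : ∀ i j : ι, j ≤ i → Xs i → Xs j)
    (hb_id : ∀ (i : ι) (x : Xs i), b i i le_rfl x = x)
    (hb_comp : ∀ (i j k : ι) (hji : j ≤ i) (hkj : k ≤ j) (x : Xs i),
      b j k hkj (b i j hji x) = b i k (hkj.trans hji) x)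
    (hb_spec : ∀ (i j : ι) (h : j ≤ i), IsSpectralTo (ts i) (ts j) (b i j h))
    (hXs : ∀ i, IsPreSpectral (ts i))
    (X : Type u) (tX : TopologicalSpace X) (f : ∀ i, X → Xs i)
    (hf_spec : ∀ i, IsSpectralTo tX (ts i) (f i))
    (hf_compat : ∀ (i j : ι) (h : j ≤ i) (x : X), b i j h (f i x) = f j x)
    (hlimTop : ∀ (Z : Type u) (tZ : TopologicalSpace Z) (g : ∀ i, Z → Xs i),
      (∀ i, @Continuous Z (Xs i) tZ (ts i) (g i)) →
      (∀ (i j : ι) (h : j ≤ i) (z : Z), b i j h (g i z) = g j z) →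
      ∃! m : Z → X, @Continuous Z X tZ tX m ∧ ∀ i, f i ∘ m = g i) :
    IsPreSpectral tX ∧
    ({U : Set X | @IsCompact X tX U ∧ tX.IsOpen U}
      = {U : Set X | ∃ (i : ι) (V : Set (Xs i)),
          @IsCompact (Xs i) (ts i) V ∧ (ts i).IsOpen V ∧ U = f i ⁻¹' V}) ∧
    (∀ (Z : Type u) (tZ : TopologicalSpace Z), IsPreSpectral tZ →
      ∀ g : ∀ i, Z → Xs i, (∀ i, IsSpectralTo tZ (ts i) (g i)) →
      (∀ (i j : ι) (h : j ≤ i) (z : Z), b i j h (g i z) = g j z) →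
      ∃! m : Z → X, IsSpectralTo tZ tX m ∧ ∀ i, f i ∘ m = g i) := by
  classical
  -- The collection of candidate compact opens
  set S : Set (Set X) := {U : Set X | ∃ (i : ι) (V : Set (Xs i)),
      @IsCompact (Xs i) (ts i) V ∧ (ts i).IsOpen V ∧ U = f i ⁻¹' V} with hSdef
  -- every member of S is compact open
  have hS_co : ∀ U ∈ S, @IsCompact X tX U ∧ tX.IsOpen U := by
    rintro U ⟨i, V, hVc, hVo, rfl⟩
    exact (hf_spec i).2 V hVc hVo
  -- tX equals the initial topology for the f i
  have htX_le : ∀ i, tX ≤ (ts i).induced (f i) := fun i =>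
    continuous_iff_le_induced.mp (hf_spec i).1
  have htle : tX ≤ ⨅ i, (ts i).induced (f i) := le_iInf htX_le
  have htX : tX = ⨅ i, (ts i).induced (f i) := by
    refine le_antisymm htle ?_
    set t' := ⨅ i, (ts i).induced (f i) with ht'
    have hcont' : ∀ i, @Continuous X (Xs i) t' (ts i) (f i) := fun i =>
      continuous_iff_le_induced.mpr (iInf_le _ i)
    obtain ⟨m, ⟨hmc, hmf⟩, _⟩ := hlimTop X t' f hcont' (fun i j h z => hf_compat i j h z)
    obtain ⟨m₂, _, hm₂u⟩ := hlimTop X tX f (fun i => (hf_spec i).1)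
      (fun i j h z => hf_compat i j h z)
    have hmcX : @Continuous X X tX tX m :=
      continuous_le_dom htle hmc
    have hid : m = id :=
      (hm₂u m ⟨hmcX, hmf⟩).trans (hm₂u id ⟨@continuous_id X tX, fun i => rfl⟩).symm
    have : @Continuous X X t' tX id := hid ▸ hmc
    exact continuous_id_iff_le.mp this
  -- tX is generated by S
  have hgen : TopologicalSpace.generateFrom S = tX := by
    have hind : ∀ i, (ts i).induced (f i) =
        generateFrom ((preimage (f i)) ''
          {V : Set (Xs i) | @IsCompact (Xs i) (ts i) V ∧ (ts i).IsOpen V}) := by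
      intro i
      conv_lhs => rw [← (hXs i).2]
      exact induced_generateFrom_eq
    have hSeq : S = ⋃ i, (preimage (f i)) ''
        {V : Set (Xs i) | @IsCompact (Xs i) (ts i) V ∧ (ts i).IsOpen V} := by
      ext U
      simp only [hSdef, mem_setOf_eq, mem_iUnion, mem_image]
      constructor
      · rintro ⟨i, V, h1, h2, h3⟩; exact ⟨i, V, ⟨h1, h2⟩, h3.symm⟩
      · rintro ⟨i, V, ⟨h1, h2⟩, h3⟩; exact ⟨i, V, h1, h2, h3.symm⟩
    rw [hSeq, generateFrom_iUnion, htX]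
    exact iInf_congr fun i => (hind i).symm
  -- S is a bounded sublattice
  have hS_lat : IsBoundedSublattice S := by
    obtain ⟨i0⟩ := ‹Nonempty ι›
    have hE : (∅ : Set X) ∈ S :=
      ⟨i0, ∅, (hXs i0).1.1.1, (hXs i0).1.1.2, (preimage_empty).symm⟩
    have hU : (univ : Set X) ∈ S :=
      ⟨i0, univ, (hXs i0).1.2.1.1, (hXs i0).1.2.1.2, (preimage_univ).symm⟩
    have key : ∀ U ∈ S, ∀ V ∈ S, (U ∪ V ∈ S) ∧ (U ∩ V ∈ S) := by
      rintro _ ⟨i, V, hVc, hVo, rfl⟩ _ ⟨j, W, hWc, hWo, rfl⟩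
      obtain ⟨k, hik, hjk⟩ := hdir i j
      have hVk := (hb_spec k i hik).2 V hVc hVo
      have hWk := (hb_spec k j hjk).2 W hWc hWo
      have hVe : f i ⁻¹' V = f k ⁻¹' (b k i hik ⁻¹' V) := by
        ext x; simp [hf_compat k i hik x]
      have hWe : f j ⁻¹' W = f k ⁻¹' (b k j hjk ⁻¹' W) := by
        ext x; simp [hf_compat k j hjk x]
      constructor
      · refine ⟨k, (b k i hik ⁻¹' V) ∪ (b k j hjk ⁻¹' W),
          (hXs k).1.2.2.1 _ ⟨hVk.1, hVk.2⟩ _ ⟨hWk.1, hWk.2⟩ |>.1,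
          (hXs k).1.2.2.1 _ ⟨hVk.1, hVk.2⟩ _ ⟨hWk.1, hWk.2⟩ |>.2, ?_⟩
        rw [hVe, hWe, preimage_union]
      · refine ⟨k, (b k i hik ⁻¹' V) ∩ (b k j hjk ⁻¹' W),
          (hXs k).1.2.2.2 _ ⟨hVk.1, hVk.2⟩ _ ⟨hWk.1, hWk.2⟩ |>.1,
          (hXs k).1.2.2.2 _ ⟨hVk.1, hVk.2⟩ _ ⟨hWk.1, hWk.2⟩ |>.2, ?_⟩
        rw [hVe, hWe, preimage_inter]
    exact ⟨hE, hU, fun U hU' V hV' => (key U hU' V hV').1,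
      fun U hU' V hV' => (key U hU' V hV').2⟩
  -- S is a topological basis for tX
  have hbasis : @TopologicalSpace.IsTopologicalBasis X tX S := by
    refine ⟨fun t₁ h₁ t₂ h₂ x hx => ⟨t₁ ∩ t₂, hS_lat.2.2.2 _ h₁ _ h₂, hx, subset_rfl⟩, ?_, hgen.symm⟩
    apply eq_univ_of_univ_subset
    exact subset_sUnion_of_mem hS_lat.2.1
  -- compact opens are exactly S
  have hS_eq : {U : Set X | @IsCompact X tX U ∧ tX.IsOpen U} = S := by
    apply Subset.antisymm
    · rintro U ⟨hUc, hUo⟩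
      obtain ⟨T, hTS, hUeq⟩ := hbasis.open_eq_sUnion hUo
      have hcov : U ⊆ ⋃ t : T, (t : Set X) := by
        rw [hUeq]; intro x hx
        obtain ⟨t, ht, hxt⟩ := hx
        exact mem_iUnion.mpr ⟨⟨t, ht⟩, hxt⟩
      obtain ⟨s, hs⟩ := hUc.elim_finite_subcover (fun t : T => (t : Set X))
        (fun t => (hS_co _ (hTS t.2)).2) hcov
      have hUeq2 : U = ⋃ t ∈ s, (t : Set X) := by
        apply Subset.antisymm hs
        intro x hx
        simp only [mem_iUnion] at hx
        obtain ⟨t, _, hxt⟩ := hx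
        rw [hUeq]; exact ⟨t, t.2, hxt⟩
      rw [hUeq2]
      clear hUeq2 hs hcov hUeq
      induction s using Finset.induction_on with
      | empty => simpa using hS_lat.1
      | insert _ _ hni ih =>
        rw [Finset.set_biUnion_insert]
        exact hS_lat.2.2.1 _ (hTS (Subtype.mem _)) _ ih
    · exact hS_co
  refine ⟨⟨hS_eq ▸ hS_lat, hS_eq ▸ hgen⟩, hS_eq, ?_⟩
  intro Z tZ _ g hg hgcomp
  obtain ⟨m, ⟨hmc, hmf⟩, hmu⟩ := hlimTop Z tZ g (fun i => (hg i).1) hgcomp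
  refine ⟨m, ⟨⟨hmc, ?_⟩, hmf⟩, fun y hy => hmu y ⟨hy.1.1, hy.2⟩⟩
  intro U hUc hUo
  have : U ∈ S := hS_eq ▸ (⟨hUc, hUo⟩ : U ∈ {U : Set X | @IsCompact X tX U ∧ tX.IsOpen U})
  obtain ⟨i, V, hVc, hVo, rfl⟩ := this
  have : m ⁻¹' (f i ⁻¹' V) = g i ⁻¹' V := by
    rw [← preimage_comp, hmf i]
  rw [this]
  exact (hg i).2 V hVc hVo
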